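/- arXiv:2503.10574 — 2 statements merged into one kernel-verified Lean document; each statement's English description precedes it below -/
import Mathlib

section
/- Let Π be a Borel probability measure on [0,1] with E_{Θ~Π}[H_B(Θ)] > 0, and let m₁ : ℕ → ℝ be the unique function with m₁(0) = 0 and, for ℓ ≥ 1, m₁(ℓ) = ℓ + E[m₁(ℓ-1-R_ℓ) + m₁(R_ℓ)]. Then there exists a finite constant C₀ (depending only on Π) such that for all ℓ ≥ 1, E[(m₁(R_ℓ) + m₁(ℓ-1-R_ℓ) + ℓ - m₁(ℓ))²] ≤ C₀·ℓ². -/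
open MeasureTheory

/-- Binary entropy `H_B(p) = -p log₂ p - (1-p) log₂ (1-p)` (with `0 log 0 = 0`). -/
noncomputable def binEnt (p : ℝ) : ℝ :=
  -(p * Real.logb 2 p) - (1 - p) * Real.logb 2 (1 - p)

/-- Expectation of `g (R_ℓ)` where `θ ~ μ` and, conditionally on `θ`,
`R_ℓ ~ Binomial(ℓ-1, θ)`. -/
noncomputable def binExp (μ : Measure ℝ) (ℓ : ℕ) (g : ℕ → ℝ) : ℝ :=
  ∫ θ, ∑ k ∈ Finset.range ℓ,
    ((ℓ - 1).choose k : ℝ) * θ ^ k * (1 - θ) ^ (ℓ - 1 - k) * g k ∂μ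

open Finset

noncomputable def wgt (n : ℕ) (x : ℝ) (k : ℕ) : ℝ := (n.choose k : ℝ) * x^k * (1-x)^(n-k)

lemma wgt_nonneg {n : ℕ} {x : ℝ} (h0 : 0 ≤ x) (h1 : x ≤ 1) (k : ℕ) : 0 ≤ wgt n x k := by
  unfold wgt
  have : (0:ℝ) ≤ 1 - x := by linarith
  positivity

lemma sum_wgt (n : ℕ) (x : ℝ) : ∑ k ∈ range (n+1), wgt n x k = 1 := by
  unfold wgt
  have h := add_pow x (1-x) n
  simp only [add_sub_cancel, one_pow] at h
  have h2 : ∑ k ∈ range (n+1), (n.choose k : ℝ) * x^k * (1-x)^(n-k)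
      = ∑ m ∈ range (n+1), x^m * (1-x)^(n-m) * (n.choose m : ℝ) :=
    Finset.sum_congr rfl (fun k _ => by ring)
  rw [h2, ← h]

lemma wgt_le_one {n : ℕ} {x : ℝ} (h0 : 0 ≤ x) (h1 : x ≤ 1) {k : ℕ} (hk : k ∈ range (n+1)) :
    wgt n x k ≤ 1 := by
  rw [← sum_wgt n x]
  exact Finset.single_le_sum (fun i _ => wgt_nonneg h0 h1 i) hk

lemma wgt_shift (n : ℕ) (x : ℝ) (f : ℕ → ℝ) :
    ∑ k ∈ range (n+2), (k : ℝ) * ((n+1).choose k : ℝ) * x^k * (1-x)^(n+1-k) * f k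
    = (n+1) * x * ∑ k ∈ range (n+1), (n.choose k : ℝ) * x^k * (1-x)^(n-k) * f (k+1) := by
  rw [Finset.sum_range_succ']
  simp only [Nat.cast_zero, zero_mul, add_zero]
  rw [Finset.mul_sum]
  refine Finset.sum_congr rfl (fun k hk => ?_)
  have hc : (k+1) * ((n+1).choose (k+1)) = (n+1) * (n.choose k) := by
    rw [mul_comm (k+1), ← Nat.add_one_mul_choose_eq n k]
  have hc' : ((k:ℝ)+1) * (((n+1).choose (k+1) : ℕ) : ℝ) = ((n:ℝ)+1) * ((n.choose k : ℕ) : ℝ) := by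
    exact_mod_cast congrArg (Nat.cast : ℕ → ℝ) hc
  have hsub : n + 1 - (k + 1) = n - k := by omega
  rw [hsub]
  push_cast
  calc (↑k + 1) * ↑((n + 1).choose (k + 1)) * x ^ (k + 1) * (1 - x) ^ (n - k) * f (k + 1)
      = ((↑k + 1) * ↑((n + 1).choose (k + 1))) * (x ^ (k+1) * ((1 - x) ^ (n - k) * f (k + 1))) := by ring
    _ = ((↑n + 1) * ↑(n.choose k)) * (x ^ (k+1) * ((1 - x) ^ (n - k) * f (k + 1))) := by rw [hc']
    _ = (↑n + 1) * x * (↑(n.choose k) * x ^ k * (1 - x) ^ (n - k) * f (k + 1)) := by ring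

lemma sum_wgt_mul (n : ℕ) (x : ℝ) : ∑ k ∈ range (n+1), (k:ℝ) * wgt n x k = n * x := by
  unfold wgt
  cases n with
  | zero => simp
  | succ m =>
    have h := wgt_shift m x (fun _ => 1)
    simp only [mul_one] at h
    have h2 : ∑ k ∈ range (m+2), (k:ℝ) * (((m+1).choose k : ℝ) * x^k * (1-x)^(m+1-k))
        = ∑ k ∈ range (m+2), (k : ℝ) * ((m+1).choose k : ℝ) * x^k * (1-x)^(m+1-k) :=
      Finset.sum_congr rfl (fun k _ => by ring)
    rw [h2, h]
    have h4 := add_pow x (1-x) m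
    simp only [add_sub_cancel, one_pow] at h4
    have h5 : ∑ k ∈ range (m+1), (m.choose k : ℝ) * x^k * (1-x)^(m-k)
        = ∑ j ∈ range (m+1), x^j * (1-x)^(m-j) * (m.choose j : ℝ) :=
      Finset.sum_congr rfl (fun k _ => by ring)
    rw [h5, ← h4]
    push_cast
    ring

lemma sum_wgt_sq (n : ℕ) (x : ℝ) :
    ∑ k ∈ range (n+1), (k:ℝ) * ((k:ℝ)-1) * wgt n x k = n * ((n:ℝ)-1) * x^2 := by
  unfold wgt
  cases n with
  | zero => simp
  | succ m =>
    have h := wgt_shift m x (fun k => (k:ℝ)-1)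
    have h2 : ∑ k ∈ range (m+2), (k:ℝ) * ((k:ℝ)-1) * (((m+1).choose k : ℝ) * x^k * (1-x)^(m+1-k))
        = ∑ k ∈ range (m+2), (k : ℝ) * ((m+1).choose k : ℝ) * x^k * (1-x)^(m+1-k) * ((k:ℝ)-1) :=
      Finset.sum_congr rfl (fun k _ => by ring)
    have h3 : ∑ k ∈ range (m+1), (m.choose k : ℝ) * x^k * (1-x)^(m-k) * (((k:ℕ):ℝ)+1-1)
        = ∑ k ∈ range (m+1), (k:ℝ) * ((m.choose k : ℝ) * x^k * (1-x)^(m-k)) :=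
      Finset.sum_congr rfl (fun k _ => by ring)
    rw [h2, h]
    push_cast
    rw [h3]
    have h6 : ∑ k ∈ range (m+1), (k:ℝ) * ((m.choose k : ℝ) * x^k * (1-x)^(m-k)) = m * x := by
      have := sum_wgt_mul m x
      unfold wgt at this
      exact this
    rw [h6]
    ring

lemma log_ge_one_sub_inv {x : ℝ} (hx : 0 < x) : 1 - 1/x ≤ Real.log x := by
  have h := Real.log_le_sub_one_of_pos (x := x⁻¹) (by positivity)
  rw [Real.log_inv] at h
  rw [one_div]
  linarith

lemma K_lo_ln (n : ℕ) (hn : 1 ≤ n) {θ : ℝ} (h0 : 0 ≤ θ) (h1 : θ ≤ 1) :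
    (n:ℝ)*θ*Real.log n + (n:ℝ)*θ*Real.log θ
      ≤ ∑ k ∈ range (n+1), wgt n θ k * ((k:ℝ) * Real.log ((k:ℝ)+1)) := by
  rcases eq_or_lt_of_le h0 with rfl | hθ
  · simp only [Real.log_zero, mul_zero, zero_mul, add_zero]
    apply Finset.sum_nonneg
    intro k hk
    have hl : 0 ≤ (k:ℝ) * Real.log ((k:ℝ)+1) := by
      apply mul_nonneg (by positivity)
      apply Real.log_nonneg; linarith [Nat.cast_nonneg (α := ℝ) k]
    exact mul_nonneg (wgt_nonneg le_rfl (by norm_num) k) hl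
  · have hnpos : (0:ℝ) < (n:ℝ) := by exact_mod_cast Nat.pos_of_ne_zero (by omega)
    set m : ℝ := (n:ℝ)*θ with hm
    have hmpos : 0 < m := mul_pos hnpos hθ
    have key : ∀ k ∈ range (n+1),
        wgt n θ k * ((k:ℝ) * Real.log m + ((k:ℝ) - m*((k:ℝ)/((k:ℝ)+1))))
          ≤ wgt n θ k * ((k:ℝ) * Real.log ((k:ℝ)+1)) := by
      intro k hk
      apply mul_le_mul_of_nonneg_left _ (wgt_nonneg h0 h1 k)
      have hk1 : (0:ℝ) < (k:ℝ)+1 := by positivity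
      have hlog : 1 - m/((k:ℝ)+1) ≤ Real.log (((k:ℝ)+1)/m) := by
        have h := log_ge_one_sub_inv (x := ((k:ℝ)+1)/m) (by positivity)
        have hrw : 1/(((k:ℝ)+1)/m) = m/((k:ℝ)+1) := by field_simp
        rw [hrw] at h; exact h
      rw [Real.log_div (ne_of_gt hk1) (ne_of_gt hmpos)] at hlog
      have hmul := mul_le_mul_of_nonneg_left hlog (Nat.cast_nonneg (α := ℝ) k)
      have e : (k:ℝ) * (1 - m/((k:ℝ)+1)) = (k:ℝ) - m*((k:ℝ)/((k:ℝ)+1)) := by ring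
      have e' : (k:ℝ) * (Real.log ((k:ℝ)+1) - Real.log m)
          = (k:ℝ)*Real.log ((k:ℝ)+1) - (k:ℝ)*Real.log m := by ring
      rw [e, e'] at hmul
      linarith
    have hsum := Finset.sum_le_sum key
    refine le_trans ?_ hsum
    have e1 : ∑ k ∈ range (n+1), wgt n θ k * ((k:ℝ) * Real.log m + ((k:ℝ) - m*((k:ℝ)/((k:ℝ)+1))))
        = Real.log m * (∑ k ∈ range (n+1), (k:ℝ) * wgt n θ k)
          + (∑ k ∈ range (n+1), (k:ℝ) * wgt n θ k)
          - m * ∑ k ∈ range (n+1), wgt n θ k * ((k:ℝ)/((k:ℝ)+1)) := by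
      rw [Finset.mul_sum, Finset.mul_sum, ← Finset.sum_add_distrib, ← Finset.sum_sub_distrib]
      exact Finset.sum_congr rfl (fun k _ => by ring)
    rw [e1, sum_wgt_mul]
    have e2 : ∑ k ∈ range (n+1), wgt n θ k * ((k:ℝ)/((k:ℝ)+1)) ≤ 1 := by
      calc ∑ k ∈ range (n+1), wgt n θ k * ((k:ℝ)/((k:ℝ)+1))
          ≤ ∑ k ∈ range (n+1), wgt n θ k := by
            apply Finset.sum_le_sum
            intro k hk
            apply mul_le_of_le_one_right (wgt_nonneg h0 h1 k)
            rw [div_le_one (by positivity)]; linarith [Nat.cast_nonneg (α := ℝ) k]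
        _ = 1 := sum_wgt n θ
    have hlogm : Real.log m * ((n:ℝ)*θ)
        = (n:ℝ)*θ*Real.log (n:ℝ) + (n:ℝ)*θ*Real.log θ := by
      rw [hm, Real.log_mul (ne_of_gt hnpos) (ne_of_gt hθ)]; ring
    rw [← hm] at hlogm
    rw [hlogm]
    have h3 := mul_le_mul_of_nonneg_left e2 (le_of_lt hmpos)
    rw [mul_one] at h3
    linarith

lemma K_up_ln (n : ℕ) (hn : 1 ≤ n) {θ : ℝ} (h0 : 0 ≤ θ) (h1 : θ ≤ 1) :
    ∑ k ∈ range (n+1), wgt n θ k * ((k:ℝ) * Real.log ((k:ℝ)+1))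
      ≤ (n:ℝ)*θ*Real.log n + (n:ℝ)*θ*Real.log θ + 2 := by
  rcases eq_or_lt_of_le h0 with rfl | hθ
  · -- θ = 0 : LHS = 0
    have hz : ∑ k ∈ range (n+1), wgt n 0 k * ((k:ℝ) * Real.log ((k:ℝ)+1)) = 0 := by
      apply Finset.sum_eq_zero
      intro k hk
      rcases Nat.eq_zero_or_pos k with rfl | hkpos
      · simp
      · have : wgt n 0 k = 0 := by
          unfold wgt; rw [zero_pow (by omega)]; ring
        rw [this, zero_mul]
    rw [hz]; norm_num
  · have hnpos : (0:ℝ) < (n:ℝ) := by exact_mod_cast Nat.pos_of_ne_zero (by omega)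
    set m : ℝ := (n:ℝ)*θ with hm
    have hmpos : 0 < m := mul_pos hnpos hθ
    -- pointwise: k log(k+1) ≤ k log(m+2) + k*((k+1)/(m+2) - 1)
    have key : ∀ k ∈ range (n+1),
        wgt n θ k * ((k:ℝ) * Real.log ((k:ℝ)+1))
          ≤ wgt n θ k * ((k:ℝ) * Real.log (m+2) + ((k:ℝ)*((k:ℝ)+1)/(m+2) - (k:ℝ))) := by
      intro k hk
      apply mul_le_mul_of_nonneg_left _ (wgt_nonneg h0 h1 k)
      have hk1 : (0:ℝ) < (k:ℝ)+1 := by positivity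
      have hm2 : (0:ℝ) < m + 2 := by linarith
      have hlog : Real.log (((k:ℝ)+1)/(m+2)) ≤ ((k:ℝ)+1)/(m+2) - 1 :=
        Real.log_le_sub_one_of_pos (by positivity)
      rw [Real.log_div (ne_of_gt hk1) (ne_of_gt hm2)] at hlog
      have hmul := mul_le_mul_of_nonneg_left hlog (Nat.cast_nonneg (α := ℝ) k)
      have e : (k:ℝ) * (Real.log ((k:ℝ)+1) - Real.log (m+2))
          = (k:ℝ)*Real.log ((k:ℝ)+1) - (k:ℝ)*Real.log (m+2) := by ring
      have e' : (k:ℝ) * (((k:ℝ)+1)/(m+2) - 1) = (k:ℝ)*((k:ℝ)+1)/(m+2) - (k:ℝ) := by ring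
      rw [e, e'] at hmul
      linarith
    have hsum := Finset.sum_le_sum key
    refine le_trans hsum ?_
    -- compute upper sum
    have e1 : ∑ k ∈ range (n+1), wgt n θ k * ((k:ℝ) * Real.log (m+2) + ((k:ℝ)*((k:ℝ)+1)/(m+2) - (k:ℝ)))
        = Real.log (m+2) * (∑ k ∈ range (n+1), (k:ℝ) * wgt n θ k)
          + ((∑ k ∈ range (n+1), (k:ℝ)*((k:ℝ)-1) * wgt n θ k)
             + 2*(∑ k ∈ range (n+1), (k:ℝ) * wgt n θ k))/(m+2)
          - (∑ k ∈ range (n+1), (k:ℝ) * wgt n θ k) := by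
      have hm2 : m + 2 ≠ 0 := by positivity
      calc ∑ k ∈ range (n+1), wgt n θ k * ((k:ℝ) * Real.log (m+2) + ((k:ℝ)*((k:ℝ)+1)/(m+2) - (k:ℝ)))
          = ∑ k ∈ range (n+1), (Real.log (m+2) * ((k:ℝ) * wgt n θ k)
              + ((k:ℝ)*((k:ℝ)-1) * wgt n θ k + 2*((k:ℝ) * wgt n θ k))/(m+2)
              - (k:ℝ) * wgt n θ k) := by
            refine Finset.sum_congr rfl (fun k _ => ?_)
            field_simp
            ring
        _ = (∑ k ∈ range (n+1), (Real.log (m+2) * ((k:ℝ) * wgt n θ k)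
              + ((k:ℝ)*((k:ℝ)-1) * wgt n θ k + 2*((k:ℝ) * wgt n θ k))/(m+2)))
              - ∑ k ∈ range (n+1), (k:ℝ) * wgt n θ k := Finset.sum_sub_distrib _ _
        _ = (∑ k ∈ range (n+1), Real.log (m+2) * ((k:ℝ) * wgt n θ k))
              + (∑ k ∈ range (n+1), ((k:ℝ)*((k:ℝ)-1) * wgt n θ k + 2*((k:ℝ) * wgt n θ k))/(m+2))
              - ∑ k ∈ range (n+1), (k:ℝ) * wgt n θ k := by rw [Finset.sum_add_distrib]
        _ = Real.log (m+2) * (∑ k ∈ range (n+1), (k:ℝ) * wgt n θ k)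
              + (∑ k ∈ range (n+1), ((k:ℝ)*((k:ℝ)-1) * wgt n θ k + 2*((k:ℝ) * wgt n θ k)))/(m+2)
              - ∑ k ∈ range (n+1), (k:ℝ) * wgt n θ k := by
            rw [← Finset.mul_sum, ← Finset.sum_div]
        _ = _ := by rw [Finset.sum_add_distrib, ← Finset.mul_sum]
    rw [e1, sum_wgt_mul, sum_wgt_sq, ← hm]
    -- moment simplification: (n(n-1)θ² + 2m)/(m+2) - m ≤ 0
    have hmom : ((n:ℝ) * ((n:ℝ)-1) * θ^2 + 2*m)/(m+2) - m ≤ 0 := by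
      rw [div_sub' (by positivity), div_nonpos_iff]
      right
      refine ⟨?_, by linarith⟩
      rw [hm]
      nlinarith [mul_nonneg hnpos.le (sq_nonneg θ)]
    -- m log(m+2) ≤ m log m + 2
    have hlog2 : m * Real.log (m+2) ≤ m * Real.log m + 2 := by
      have hlog : Real.log ((m+2)/m) ≤ (m+2)/m - 1 :=
        Real.log_le_sub_one_of_pos (by positivity)
      rw [Real.log_div (by positivity) (ne_of_gt hmpos)] at hlog
      have h2 : (m+2)/m - 1 = 2/m := by field_simp; ring
      rw [h2] at hlog
      have hmul := mul_le_mul_of_nonneg_left hlog (le_of_lt hmpos)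
      have : m * (2/m) = 2 := by field_simp
      nlinarith [hmul]
    have hlogm : m * Real.log m = m*Real.log (n:ℝ) + m*Real.log θ := by
      nth_rewrite 2 [hm]
      rw [Real.log_mul (ne_of_gt hnpos) (ne_of_gt hθ)]; ring
    linarith [hmom, hlog2, hlogm]

lemma sqrt_split {x y : ℝ} (hx : 0 ≤ x) (hy : 0 ≤ y) (hge : 1 ≤ x + y) :
    Real.sqrt (x+y) + x*y/(2*(x+y)*Real.sqrt (x+y)) ≤ Real.sqrt x + Real.sqrt y := by
  have hpos : 0 < x + y := by linarith
  set u := Real.sqrt (x+y) with hu_def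
  have hu : u^2 = x + y := Real.sq_sqrt hpos.le
  have hupos : 0 < u := Real.sqrt_pos.mpr hpos
  set s := Real.sqrt (x*y) with hs_def
  have hs0 : 0 ≤ s := Real.sqrt_nonneg _
  have hs2 : s^2 = x*y := Real.sq_sqrt (mul_nonneg hx hy)
  have h2s : 2*s ≤ x + y := by
    have h1 : x*y ≤ ((x+y)/2)^2 := by nlinarith [sq_nonneg (x-y)]
    have h2 : s ≤ (x+y)/2 := by
      calc s ≤ Real.sqrt (((x+y)/2)^2) := Real.sqrt_le_sqrt h1
        _ = (x+y)/2 := Real.sqrt_sq (by positivity)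
    linarith
  have hmul : Real.sqrt x * Real.sqrt y = s := by
    rw [hs_def, ← Real.sqrt_mul hx]
  have hsum : (Real.sqrt x + Real.sqrt y)^2 = x + y + 2*s := by
    rw [add_sq, Real.sq_sqrt hx, Real.sq_sqrt hy]
    linear_combination 2 * hmul
  have hxy : Real.sqrt x + Real.sqrt y = Real.sqrt (x+y+2*s) := by
    rw [← hsum, Real.sqrt_sq (by positivity)]
  rw [hxy]
  set d := x*y/(2*(x+y)*u) with hd_def
  have hd0 : 0 ≤ d := by positivity
  have hd : d*(2*(x+y)*u) = s^2 := by rw [hd_def, hs2]; field_simp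
  have e1 : 2*u*d*(x+y) = s^2 := by linear_combination hd
  have e2 : 2*u*d ≤ s/2 := by
    rw [← mul_le_mul_iff_of_pos_right hpos]
    nlinarith [e1, h2s, hs0]
  have e3 : 4*u*d ≤ s := by
    rw [← mul_le_mul_iff_of_pos_right hpos]
    nlinarith [e1, h2s, hs0]
  have e4 : 16*(x+y)*d^2 ≤ s^2 := by
    have h := mul_nonneg (sub_nonneg.mpr e3) (by positivity : (0:ℝ) ≤ s + 4*u*d)
    nlinarith [h, hu]
  have e5 : d^2 ≤ s/32 := by
    rw [← mul_le_mul_iff_of_pos_left (show (0:ℝ) < 32*(x+y) by linarith)]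
    nlinarith [e4, h2s, hs0]
  rw [show Real.sqrt (x+y+2*s) = Real.sqrt (x+y+2*s) from rfl]
  rw [Real.le_sqrt (by positivity) (by positivity)]
  nlinarith [e2, e5, hu]

lemma K_sqrt (n : ℕ) (hn : 1 ≤ n) {θ : ℝ} (h0 : 0 ≤ θ) (h1 : θ ≤ 1) :
    Real.sqrt n + ((n:ℝ)-1)*θ*(1-θ)/(2*Real.sqrt n)
      ≤ ∑ k ∈ range (n+1), wgt n θ k * (Real.sqrt k + Real.sqrt ((n - k : ℕ) : ℝ)) := by
  have hn1 : (1:ℝ) ≤ (n:ℝ) := by exact_mod_cast hn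
  have hnpos : (0:ℝ) < n := by linarith
  have hsn : 0 < Real.sqrt n := Real.sqrt_pos.mpr hnpos
  have key : ∀ k ∈ range (n+1),
      wgt n θ k * (Real.sqrt n + (k:ℝ)*((n:ℝ)-(k:ℝ))/(2*(n:ℝ)*Real.sqrt n))
        ≤ wgt n θ k * (Real.sqrt k + Real.sqrt ((n - k : ℕ) : ℝ)) := by
    intro k hk
    have hkn : k ≤ n := by simpa [Nat.lt_succ_iff] using Finset.mem_range.mp hk
    have hy : ((n - k : ℕ) : ℝ) = (n:ℝ) - (k:ℝ) := by
      rw [Nat.cast_sub hkn]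
    apply mul_le_mul_of_nonneg_left _ (wgt_nonneg h0 h1 k)
    have hx0 : (0:ℝ) ≤ (k:ℝ) := Nat.cast_nonneg k
    have hy0 : (0:ℝ) ≤ (n:ℝ) - (k:ℝ) := by
      rw [← hy]; exact Nat.cast_nonneg _
    have h := sqrt_split hx0 hy0 (by linarith : (1:ℝ) ≤ (k:ℝ) + ((n:ℝ)-(k:ℝ)))
    rw [show (k:ℝ) + ((n:ℝ)-(k:ℝ)) = (n:ℝ) by ring] at h
    rw [hy]
    exact h
  have hsum := Finset.sum_le_sum key
  refine le_trans ?_ hsum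
  have e1 : ∑ k ∈ range (n+1), wgt n θ k * (Real.sqrt n + (k:ℝ)*((n:ℝ)-(k:ℝ))/(2*(n:ℝ)*Real.sqrt n))
      = Real.sqrt n * (∑ k ∈ range (n+1), wgt n θ k)
        + ((((n:ℝ)-1) * ∑ k ∈ range (n+1), (k:ℝ) * wgt n θ k)
           - ∑ k ∈ range (n+1), (k:ℝ)*((k:ℝ)-1) * wgt n θ k)/(2*(n:ℝ)*Real.sqrt n) := by
    calc ∑ k ∈ range (n+1), wgt n θ k * (Real.sqrt n + (k:ℝ)*((n:ℝ)-(k:ℝ))/(2*(n:ℝ)*Real.sqrt n))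
        = ∑ k ∈ range (n+1), (Real.sqrt n * wgt n θ k
            + (((n:ℝ)-1) * ((k:ℝ) * wgt n θ k) - (k:ℝ)*((k:ℝ)-1) * wgt n θ k)/(2*(n:ℝ)*Real.sqrt n)) := by
          refine Finset.sum_congr rfl (fun k _ => ?_)
          field_simp
          ring
      _ = Real.sqrt n * (∑ k ∈ range (n+1), wgt n θ k)
            + (∑ k ∈ range (n+1), (((n:ℝ)-1) * ((k:ℝ) * wgt n θ k) - (k:ℝ)*((k:ℝ)-1) * wgt n θ k))/(2*(n:ℝ)*Real.sqrt n) := by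
          rw [Finset.sum_add_distrib, ← Finset.mul_sum, ← Finset.sum_div]
      _ = _ := by rw [Finset.sum_sub_distrib, ← Finset.mul_sum]
  rw [e1, sum_wgt, sum_wgt_mul, sum_wgt_sq, mul_one]
  have e2 : ((n:ℝ)-1)*θ*(1-θ)/(2*Real.sqrt n)
      = (((n:ℝ)-1) * ((n:ℝ)*θ) - (n:ℝ)*((n:ℝ)-1)*θ^2)/(2*(n:ℝ)*Real.sqrt n) := by
    field_simp
  rw [e2]


lemma wgt_reflect (n : ℕ) (θ : ℝ) (f : ℕ → ℝ) :
    ∑ k ∈ range (n+1), wgt n θ k * f (n - k) = ∑ k ∈ range (n+1), wgt n (1-θ) k * f k := by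
  have h1 : ∑ k ∈ range (n+1), wgt n θ k * f (n - k)
      = ∑ k ∈ range (n+1), wgt n (1-θ) (n - k) * f (n - k) := by
    refine Finset.sum_congr rfl (fun k hk => ?_)
    have hkn : k ≤ n := by simpa [Nat.lt_succ_iff] using Finset.mem_range.mp hk
    have : wgt n (1-θ) (n-k) = wgt n θ k := by
      unfold wgt
      rw [Nat.choose_symm hkn, show n - (n - k) = k by omega,
        show (1:ℝ) - (1 - θ) = θ by ring]
      ring
    rw [this]
  rw [h1]
  have := Finset.sum_range_reflect (fun j => wgt n (1-θ) j * f j) (n+1)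
  simpa using this

lemma binEnt_eq (θ : ℝ) :
    binEnt θ = (-(θ*Real.log θ) - (1-θ)*Real.log (1-θ))/Real.log 2 := by
  unfold binEnt Real.logb
  ring

lemma neg_mul_log_bounds {θ : ℝ} (h0 : 0 ≤ θ) (h1 : θ ≤ 1) :
    0 ≤ -(θ*Real.log θ) ∧ -(θ*Real.log θ) ≤ 1 := by
  rcases eq_or_lt_of_le h0 with rfl | hθ
  · simp
  · constructor
    · have : Real.log θ ≤ 0 := Real.log_nonpos h0 h1
      nlinarith
    · have h := log_ge_one_sub_inv hθ
      have := mul_le_mul_of_nonneg_left h (le_of_lt hθ)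
      have he : θ * (1 - 1/θ) = θ - 1 := by field_simp
      nlinarith

lemma binEnt_nonneg {θ : ℝ} (h0 : 0 ≤ θ) (h1 : θ ≤ 1) : 0 ≤ binEnt θ := by
  rw [binEnt_eq]
  have ha := neg_mul_log_bounds h0 h1
  have hb := neg_mul_log_bounds (by linarith : (0:ℝ) ≤ 1-θ) (by linarith)
  have hl2 : 0 < Real.log 2 := Real.log_pos one_lt_two
  apply div_nonneg _ hl2.le
  linarith [ha.1, hb.1]

lemma binEnt_le {θ : ℝ} (h0 : 0 ≤ θ) (h1 : θ ≤ 1) : binEnt θ ≤ 2/Real.log 2 := by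
  rw [binEnt_eq]
  have ha := neg_mul_log_bounds h0 h1
  have hb := neg_mul_log_bounds (by linarith : (0:ℝ) ≤ 1-θ) (by linarith)
  have hl2 : 0 < Real.log 2 := Real.log_pos one_lt_two
  rw [div_le_div_iff_of_pos_right] <;> try exact hl2
  linarith [ha.2, hb.2]

lemma measurable_binEnt : Measurable binEnt := by
  have : binEnt = fun p => -(p * (Real.log p / Real.log 2)) - (1-p)*(Real.log (1-p)/Real.log 2) := rfl
  rw [this]
  apply Measurable.sub
  · exact (measurable_id.mul (Real.measurable_log.div_const _)).neg
  · exact (measurable_const.sub measurable_id).mul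
      ((Real.measurable_log.comp (measurable_const.sub measurable_id)).div_const _)

lemma binExp_eq (μ : Measure ℝ) (N : ℕ) (g : ℕ → ℝ) :
    binExp μ (N+1) g = ∫ θ, ∑ k ∈ range (N+1), wgt N θ k * g k ∂μ := by
  unfold binExp wgt
  simp only [Nat.add_sub_cancel]

lemma int_poly (μ : Measure ℝ) [IsProbabilityMeasure μ]
    (hae : ∀ᵐ θ ∂μ, θ ∈ Set.Icc (0:ℝ) 1) (N : ℕ) (g : ℕ → ℝ) :
    Integrable (fun θ => ∑ k ∈ range (N+1), wgt N θ k * g k) μ := by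
  apply Integrable.mono' (integrable_const (∑ k ∈ range (N+1), |g k|))
  · have hc : Continuous (fun θ : ℝ => ∑ k ∈ range (N+1), wgt N θ k * g k) := by
      apply continuous_finset_sum
      intro k _
      exact ((continuous_const.mul (continuous_pow k)).mul
        ((continuous_const.sub continuous_id).pow (N-k))).mul continuous_const
    exact hc.aestronglyMeasurable
  · filter_upwards [hae] with θ hθ
    rw [Real.norm_eq_abs]
    calc |∑ k ∈ range (N+1), wgt N θ k * g k|
        ≤ ∑ k ∈ range (N+1), |wgt N θ k * g k| := Finset.abs_sum_le_sum_abs _ _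
      _ ≤ ∑ k ∈ range (N+1), |g k| := by
          apply Finset.sum_le_sum
          intro k hk
          rw [abs_mul, abs_of_nonneg (wgt_nonneg hθ.1 hθ.2 k)]
          calc wgt N θ k * |g k| ≤ 1 * |g k| :=
                mul_le_mul_of_nonneg_right (wgt_le_one hθ.1 hθ.2 hk) (abs_nonneg _)
            _ = |g k| := one_mul _

lemma int_binEnt (μ : Measure ℝ) [IsProbabilityMeasure μ]
    (hae : ∀ᵐ θ ∂μ, θ ∈ Set.Icc (0:ℝ) 1) : Integrable binEnt μ := by
  apply Integrable.mono' (integrable_const (2/Real.log 2))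
  · exact measurable_binEnt.aestronglyMeasurable
  · filter_upwards [hae] with θ hθ
    rw [Real.norm_eq_abs, abs_of_nonneg (binEnt_nonneg hθ.1 hθ.2)]
    exact binEnt_le hθ.1 hθ.2

lemma int_q (μ : Measure ℝ) [IsProbabilityMeasure μ]
    (hae : ∀ᵐ θ ∂μ, θ ∈ Set.Icc (0:ℝ) 1) : Integrable (fun θ : ℝ => θ*(1-θ)) μ := by
  apply Integrable.mono' (integrable_const 1)
  · exact (measurable_id.mul (measurable_const.sub measurable_id)).aestronglyMeasurable
  · filter_upwards [hae] with θ hθ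
    rw [Real.norm_eq_abs]
    rw [abs_of_nonneg (mul_nonneg hθ.1 (by linarith [hθ.2]))]
    nlinarith [hθ.1, hθ.2]

lemma step_le (μ : Measure ℝ) [IsProbabilityMeasure μ]
    (hae : ∀ᵐ θ ∂μ, θ ∈ Set.Icc (0:ℝ) 1) (N : ℕ) (g : ℕ → ℝ) (c1 c2 : ℝ)
    (hpt : ∀ θ : ℝ, 0 ≤ θ → θ ≤ 1 →
      ∑ k ∈ range (N+1), wgt N θ k * g k ≤ c1 + c2 * binEnt θ) :
    binExp μ (N+1) g ≤ c1 + c2 * ∫ θ, binEnt θ ∂μ := by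
  rw [binExp_eq]
  have hint : Integrable (fun θ => c1 + c2 * binEnt θ) μ :=
    (integrable_const c1).add ((int_binEnt μ hae).const_mul c2)
  have h := integral_mono_ae (int_poly μ hae N g) hint
    (by filter_upwards [hae] with θ hθ; exact hpt θ hθ.1 hθ.2)
  refine le_trans h ?_
  rw [integral_add (integrable_const c1) ((int_binEnt μ hae).const_mul c2),
    integral_const, integral_const_mul, probReal_univ]
  simp

lemma step_ge (μ : Measure ℝ) [IsProbabilityMeasure μ]
    (hae : ∀ᵐ θ ∂μ, θ ∈ Set.Icc (0:ℝ) 1) (N : ℕ) (g : ℕ → ℝ) (c1 c2 c3 : ℝ)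
    (hpt : ∀ θ : ℝ, 0 ≤ θ → θ ≤ 1 →
      c1 + c2 * binEnt θ + c3 * (θ*(1-θ)) ≤ ∑ k ∈ range (N+1), wgt N θ k * g k) :
    c1 + c2 * (∫ θ, binEnt θ ∂μ) + c3 * (∫ θ, θ*(1-θ) ∂μ) ≤ binExp μ (N+1) g := by
  rw [binExp_eq]
  have hint : Integrable (fun θ => c1 + c2 * binEnt θ + c3 * (θ*(1-θ))) μ :=
    ((integrable_const c1).add ((int_binEnt μ hae).const_mul c2)).add
      ((int_q μ hae).const_mul c3)
  have h := integral_mono_ae hint (int_poly μ hae N g)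
    (by filter_upwards [hae] with θ hθ; exact hpt θ hθ.1 hθ.2)
  refine le_trans ?_ h
  have e3 := integral_add ((integrable_const c1).add ((int_binEnt μ hae).const_mul c2))
      ((int_q μ hae).const_mul c3)
  have e12 := integral_add (integrable_const c1) ((int_binEnt μ hae).const_mul c2)
  simp only [Pi.add_apply] at e3
  rw [e3, e12, integral_const, integral_const_mul, integral_const_mul, probReal_univ]
  simp

lemma log_le_two_sqrt {x : ℝ} (hx : 1 ≤ x) : Real.log x ≤ 2*Real.sqrt x := by
  have h0 : (0:ℝ) ≤ x := by linarith
  have hs := Real.log_sqrt h0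
  have hpos : 0 < Real.sqrt x := Real.sqrt_pos.mpr (by linarith)
  have h := Real.log_le_sub_one_of_pos hpos
  rw [hs] at h
  linarith [Real.sqrt_nonneg x]

lemma sqrt_succ_le {x : ℝ} (hx : 0 ≤ x) : Real.sqrt (x+1) ≤ Real.sqrt x + 1 := by
  have h1 : x + 1 ≤ (Real.sqrt x + 1)^2 := by
    have := Real.sq_sqrt hx
    nlinarith [Real.sqrt_nonneg x]
  calc Real.sqrt (x+1) ≤ Real.sqrt ((Real.sqrt x + 1)^2) := Real.sqrt_le_sqrt h1
    _ = Real.sqrt x + 1 := Real.sqrt_sq (by positivity)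

lemma sqrt_four_mul {x : ℝ} (hx : 0 ≤ x) : Real.sqrt (4*x) = 2*Real.sqrt x := by
  rw [Real.sqrt_mul (by norm_num : (0:ℝ) ≤ 4)]
  rw [show (4:ℝ) = 2^2 by norm_num, Real.sqrt_sq (by norm_num : (0:ℝ) ≤ 2)]

-- phi lemmas
lemma phi_super {x y : ℝ} (hx : 0 ≤ x) (hy : 0 ≤ y) :
    x*Real.log (x+1) + y*Real.log (y+1) ≤ (x+y+1)*Real.log (x+y+2) := by
  have l0 : 0 ≤ Real.log (x+y+2) := Real.log_nonneg (by linarith)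
  have l1 : Real.log (x+1) ≤ Real.log (x+y+2) := Real.log_le_log (by linarith) (by linarith)
  have l2 : Real.log (y+1) ≤ Real.log (x+y+2) := Real.log_le_log (by linarith) (by linarith)
  nlinarith [mul_le_mul_of_nonneg_left l1 hx, mul_le_mul_of_nonneg_left l2 hy]

lemma phi_gap {x y : ℝ} (hx : 0 ≤ x) (hy : 0 ≤ y) :
    (x+y+1)*Real.log (x+y+2) - x*Real.log (x+1) - y*Real.log (y+1)
      ≤ Real.log (x+y+2) + (x+y+2) := by
  have hx1 : (0:ℝ) < x+1 := by linarith
  have hy1 : (0:ℝ) < y+1 := by linarith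
  have hxy : (0:ℝ) < x+y+2 := by linarith
  have d1 : Real.log (x+y+2) - Real.log (x+1) ≤ (y+1)/(x+1) := by
    have h := Real.log_le_sub_one_of_pos (show (0:ℝ) < (x+y+2)/(x+1) by positivity)
    rw [Real.log_div (ne_of_gt hxy) (ne_of_gt hx1)] at h
    have : (x+y+2)/(x+1) - 1 = (y+1)/(x+1) := by field_simp; ring
    linarith [this ▸ h]
  have d2 : Real.log (x+y+2) - Real.log (y+1) ≤ (x+1)/(y+1) := by
    have h := Real.log_le_sub_one_of_pos (show (0:ℝ) < (x+y+2)/(y+1) by positivity)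
    rw [Real.log_div (ne_of_gt hxy) (ne_of_gt hy1)] at h
    have : (x+y+2)/(y+1) - 1 = (x+1)/(y+1) := by field_simp; ring
    linarith [this ▸ h]
  have b1 : x*(Real.log (x+y+2) - Real.log (x+1)) ≤ y+1 := by
    have h := mul_le_mul_of_nonneg_left d1 hx
    have h2 : x*((y+1)/(x+1)) ≤ y+1 := by
      rw [mul_div_assoc'] ; rw [div_le_iff₀ hx1]; nlinarith
    linarith
  have b2 : y*(Real.log (x+y+2) - Real.log (y+1)) ≤ x+1 := by
    have h := mul_le_mul_of_nonneg_left d2 hy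
    have h2 : y*((x+1)/(y+1)) ≤ x+1 := by
      rw [mul_div_assoc'] ; rw [div_le_iff₀ hy1]; nlinarith
    linarith
  nlinarith [b1, b2]

-- upper pointwise step
lemma upper_step_pointwise (N : ℕ) (hN : 1 ≤ N) {θ : ℝ} (h0 : 0 ≤ θ) (h1 : θ ≤ 1)
    (A b : ℝ) (hA : 0 ≤ A) (hb : 0 ≤ b) (m₁ : ℕ → ℝ)
    (ih : ∀ i, i ≤ N → m₁ i ≤ A*(i:ℝ)*Real.log ((i:ℝ)+1) + b*(i:ℝ)) :
    ∑ k ∈ range (N+1), wgt N θ k * (m₁ (N-k) + m₁ k)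
      ≤ A*((N:ℝ)*Real.log N) + A*(N:ℝ)*(θ*Real.log θ + (1-θ)*Real.log (1-θ))
        + 4*A + b*(N:ℝ) := by
  set u : ℕ → ℝ := fun i => A*(i:ℝ)*Real.log ((i:ℝ)+1) + b*(i:ℝ) with hu
  have husum : ∀ x : ℝ, 0 ≤ x → x ≤ 1 →
      ∑ k ∈ range (N+1), wgt N x k * u k
        ≤ A*((N:ℝ)*x*Real.log N + (N:ℝ)*x*Real.log x + 2) + b*((N:ℝ)*x) := by
    intro x hx0 hx1
    have e : ∑ k ∈ range (N+1), wgt N x k * u k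
        = A * (∑ k ∈ range (N+1), wgt N x k * ((k:ℝ) * Real.log ((k:ℝ)+1)))
          + b * (∑ k ∈ range (N+1), (k:ℝ) * wgt N x k) := by
      rw [Finset.mul_sum, Finset.mul_sum, ← Finset.sum_add_distrib]
      exact Finset.sum_congr rfl (fun k _ => by rw [hu]; ring)
    rw [e, sum_wgt_mul]
    have hK := K_up_ln N hN hx0 hx1
    nlinarith [mul_le_mul_of_nonneg_left hK hA]
  have hstep1 : ∑ k ∈ range (N+1), wgt N θ k * (m₁ (N-k) + m₁ k)
      ≤ ∑ k ∈ range (N+1), wgt N θ k * (u (N-k) + u k) := by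
    apply Finset.sum_le_sum
    intro k hk
    have hkN : k ≤ N := by simpa [Nat.lt_succ_iff] using Finset.mem_range.mp hk
    exact mul_le_mul_of_nonneg_left
      (add_le_add (ih (N-k) (by omega)) (ih k hkN)) (wgt_nonneg h0 h1 k)
  have hsplit : ∑ k ∈ range (N+1), wgt N θ k * (u (N-k) + u k)
      = (∑ k ∈ range (N+1), wgt N θ k * u (N-k)) + ∑ k ∈ range (N+1), wgt N θ k * u k := by
    rw [← Finset.sum_add_distrib]
    exact Finset.sum_congr rfl (fun k _ => by ring)
  have hrefl := wgt_reflect N θ u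
  have hside1 := husum (1-θ) (by linarith) (by linarith)
  have hside2 := husum θ h0 h1
  calc ∑ k ∈ range (N+1), wgt N θ k * (m₁ (N-k) + m₁ k)
      ≤ ∑ k ∈ range (N+1), wgt N θ k * (u (N-k) + u k) := hstep1
    _ = (∑ k ∈ range (N+1), wgt N (1-θ) k * u k) + ∑ k ∈ range (N+1), wgt N θ k * u k := by
        rw [hsplit, hrefl]
    _ ≤ (A*((N:ℝ)*(1-θ)*Real.log N + (N:ℝ)*(1-θ)*Real.log (1-θ) + 2) + b*((N:ℝ)*(1-θ)))
        + (A*((N:ℝ)*θ*Real.log N + (N:ℝ)*θ*Real.log θ + 2) + b*((N:ℝ)*θ)) :=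
        add_le_add hside1 hside2
    _ = A*((N:ℝ)*Real.log N) + A*(N:ℝ)*(θ*Real.log θ + (1-θ)*Real.log (1-θ))
        + 4*A + b*(N:ℝ) := by ring

-- lower pointwise step
lemma lower_step_pointwise (N : ℕ) (hN : 1 ≤ N) {θ : ℝ} (h0 : 0 ≤ θ) (h1 : θ ≤ 1)
    (A B D : ℝ) (hA : 0 ≤ A) (hD : 0 ≤ D) (m₁ : ℕ → ℝ)
    (ih : ∀ i, i ≤ N →
      A*(i:ℝ)*Real.log ((i:ℝ)+1) - B*(i:ℝ) + D*Real.sqrt i ≤ m₁ i) :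
    A*((N:ℝ)*Real.log N) + A*(N:ℝ)*(θ*Real.log θ + (1-θ)*Real.log (1-θ))
      - B*(N:ℝ) + D*Real.sqrt N + (D*((N:ℝ)-1)/(2*Real.sqrt N))*(θ*(1-θ))
      ≤ ∑ k ∈ range (N+1), wgt N θ k * (m₁ (N-k) + m₁ k) := by
  set u : ℕ → ℝ := fun i => A*(i:ℝ)*Real.log ((i:ℝ)+1) - B*(i:ℝ) + D*Real.sqrt i with hu
  have hstep1 : ∑ k ∈ range (N+1), wgt N θ k * (u (N-k) + u k)
      ≤ ∑ k ∈ range (N+1), wgt N θ k * (m₁ (N-k) + m₁ k) := by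
    apply Finset.sum_le_sum
    intro k hk
    have hkN : k ≤ N := by simpa [Nat.lt_succ_iff] using Finset.mem_range.mp hk
    exact mul_le_mul_of_nonneg_left
      (add_le_add (ih (N-k) (by omega)) (ih k hkN)) (wgt_nonneg h0 h1 k)
  refine le_trans ?_ hstep1
  -- split the u-sum into A-parts, B-part, D-part
  have hsplit : ∑ k ∈ range (N+1), wgt N θ k * (u (N-k) + u k)
      = A * (∑ k ∈ range (N+1), wgt N θ k * (((N-k:ℕ):ℝ) * Real.log (((N-k:ℕ):ℝ)+1)))
        + A * (∑ k ∈ range (N+1), wgt N θ k * ((k:ℝ) * Real.log ((k:ℝ)+1)))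
        - B * (∑ k ∈ range (N+1), wgt N θ k * (((N-k:ℕ):ℝ) + (k:ℝ)))
        + D * (∑ k ∈ range (N+1), wgt N θ k * (Real.sqrt k + Real.sqrt ((N-k:ℕ):ℝ))) := by
    rw [Finset.mul_sum, Finset.mul_sum, Finset.mul_sum, Finset.mul_sum,
      ← Finset.sum_add_distrib, ← Finset.sum_sub_distrib, ← Finset.sum_add_distrib]
    exact Finset.sum_congr rfl (fun k _ => by rw [hu]; ring)
  rw [hsplit]
  -- evaluate / bound each piece
  have hBpart : ∑ k ∈ range (N+1), wgt N θ k * (((N-k:ℕ):ℝ) + (k:ℝ)) = (N:ℝ) := by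
    have e : ∀ k ∈ range (N+1), wgt N θ k * (((N-k:ℕ):ℝ) + (k:ℝ)) = (N:ℝ) * wgt N θ k := by
      intro k hk
      have hkN : k ≤ N := by simpa [Nat.lt_succ_iff] using Finset.mem_range.mp hk
      have : ((N-k:ℕ):ℝ) = (N:ℝ) - (k:ℝ) := by rw [Nat.cast_sub hkN]
      rw [this]; ring
    rw [Finset.sum_congr rfl e, ← Finset.mul_sum, sum_wgt, mul_one]
  have hrefl := wgt_reflect N θ (fun i => (i:ℝ) * Real.log ((i:ℝ)+1))
  have hA1 := K_lo_ln N hN (by linarith : (0:ℝ) ≤ 1-θ) (by linarith : (1:ℝ)-θ ≤ 1)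
  have hA2 := K_lo_ln N hN h0 h1
  have hDpart := K_sqrt N hN h0 h1
  have c1 := mul_le_mul_of_nonneg_left hA1 hA
  have c2 := mul_le_mul_of_nonneg_left hA2 hA
  have c3 := mul_le_mul_of_nonneg_left hDpart hD
  rw [hBpart, hrefl]
  have expand : D * (Real.sqrt N + ((N:ℝ)-1)*θ*(1-θ)/(2*Real.sqrt N))
      = D*Real.sqrt N + (D*((N:ℝ)-1)/(2*Real.sqrt N))*(θ*(1-θ)) := by ring
  nlinarith [c1, c2, c3]

lemma lower_combine (A B D Kq x sx m lx l2 s1 : ℝ)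
    (hkey : 1 + A*(x*lx) - B*x + D*sx + D*(x-1)/(2*sx)*Kq ≤ m)
    (t4 : 4*A*(sx-1) ≤ D*(x-1)/(2*sx)*Kq)
    (t1 : A*((x+1)*l2) ≤ A*(x*lx + 2 + l2))
    (t2 : A*l2 ≤ A*(4*sx))
    (t3 : D*s1 ≤ D*(sx+1))
    (hBd : B = 6*A + D + 1) :
    A*(x+1)*l2 - B*(x+1) + D*s1 ≤ m := by
  linarith

lemma final_combine (A b B E C x y z mk my ml lx ly lz : ℝ)
    (hxy : x + y + 1 = z) (hz1 : 1 ≤ z)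
    (u1 : mk ≤ A*x*lx + b*x) (u2 : my ≤ A*y*ly + b*y) (u3 : ml ≤ A*z*lz + b*z)
    (l1 : A*x*lx - B*x ≤ mk) (l2 : A*y*ly - B*y ≤ my) (l3 : A*z*lz - B*z ≤ ml)
    (hsuperA : A*(x*lx + y*ly) ≤ A*(z*lz))
    (hgapA : A*(z*lz - x*lx - y*ly) ≤ A*(lz + (z+1)))
    (hlogzA : A*lz ≤ A*z) (hAz : A*1 ≤ A*z)
    (hAz0 : 0 ≤ A*z) (hbz0 : 0 ≤ b*z) (hBz0 : 0 ≤ B*z)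
    (hb0 : 0 ≤ b) (hB0 : 0 ≤ B)
    (hE : E = b + B) (hC : C = 3*A + 2*E + 1) :
    -(C*z) ≤ mk + my + z - ml ∧ mk + my + z - ml ≤ C*z := by
  constructor <;> nlinarith [u1, u2, u3, l1, l2, l3, hsuperA, hgapA, hlogzA, hAz]

set_option maxHeartbeats 1000000 in
theorem stmt3 (μ : Measure ℝ) [IsProbabilityMeasure μ]
    (hsupp : μ (Set.Icc (0:ℝ) 1)ᶜ = 0)
    (hpos : 0 < ∫ θ, binEnt θ ∂μ)
    (m₁ : ℕ → ℝ) (hm0 : m₁ 0 = 0)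
    (hmrec : ∀ ℓ : ℕ, 1 ≤ ℓ →
      m₁ ℓ = (ℓ : ℝ) + binExp μ ℓ (fun k => m₁ (ℓ - 1 - k) + m₁ k)) :
    ∃ C₀ : ℝ, ∀ ℓ : ℕ, 1 ≤ ℓ →
      binExp μ ℓ (fun k => (m₁ k + m₁ (ℓ - 1 - k) + (ℓ : ℝ) - m₁ ℓ) ^ 2)
        ≤ C₀ * (ℓ : ℝ) ^ 2 := by
  classical
  have hae : ∀ᵐ θ ∂μ, θ ∈ Set.Icc (0:ℝ) 1 := by
    rw [MeasureTheory.ae_iff]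
    exact hsupp
  set H := ∫ θ, binEnt θ ∂μ with hH
  set L2 := Real.log 2 with hL2
  have hL2pos : 0 < L2 := Real.log_pos one_lt_two
  set Kq := ∫ θ, θ*(1-θ) ∂μ with hKq
  -- positivity of Kq
  have hKqpos : 0 < Kq := by
    by_contra hc
    push_neg at hc
    have hq0 : 0 ≤ᵐ[μ] fun θ : ℝ => θ*(1-θ) := by
      filter_upwards [hae] with θ hθ
      exact mul_nonneg hθ.1 (by linarith [hθ.2])
    have hge : 0 ≤ Kq := by
      rw [hKq]; exact integral_nonneg_of_ae hq0
    have heq : Kq = 0 := le_antisymm hc hge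
    have hzero : (fun θ : ℝ => θ*(1-θ)) =ᵐ[μ] 0 :=
      (integral_eq_zero_iff_of_nonneg_ae hq0 (int_q μ hae)).mp (by rw [← hKq]; exact heq)
    have hent0 : binEnt =ᵐ[μ] 0 := by
      filter_upwards [hzero, hae] with θ hθ0 hθI
      have : θ*(1-θ) = 0 := hθ0
      rcases mul_eq_zero.mp this with h | h
      · subst h; simp [binEnt]
      · have : θ = 1 := by linarith
        subst this; simp [binEnt]
    have : H = 0 := by
      rw [hH, integral_congr_ae hent0]
      simp
    linarith
  set A := 1/(L2*H) with hA_def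
  have hApos : 0 < A := by
    rw [hA_def]
    positivity
  set b := 1 + 4*A with hb_def
  have hbpos : 0 < b := by rw [hb_def]; linarith
  set D := 8*A/Kq with hD_def
  have hDpos : 0 < D := by rw [hD_def]; positivity
  set B := 6*A + D + 1 with hB_def
  have hBpos : 0 < B := by rw [hB_def]; linarith
  have hDK : D * Kq = 8*A := by rw [hD_def]; field_simp
  have hAH : A * L2 * H = 1 := by rw [hA_def]; field_simp
  -- m₁ 1 = 1
  have hm1 : m₁ 1 = 1 := by
    have h := hmrec 1 le_rfl
    have hz : binExp μ 1 (fun k => m₁ (1 - 1 - k) + m₁ k) = 0 := by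
      unfold binExp
      simp [hm0]
    rw [hz] at h
    simpa using h
  -- recursion in convenient form
  have hrec' : ∀ N : ℕ, m₁ (N+1) = ((N:ℝ)+1) + binExp μ (N+1) (fun k => m₁ (N-k) + m₁ k) := by
    intro N
    have h := hmrec (N+1) (by omega)
    simpa using h
  -- binEnt-ln conversion
  have hent_ln : ∀ θ : ℝ, θ*Real.log θ + (1-θ)*Real.log (1-θ) = -(L2 * binEnt θ) := by
    intro θ
    rw [binEnt_eq, hL2]
    field_simp
    ring
  -- UPPER BOUND
  have upper : ∀ ℓ : ℕ, m₁ ℓ ≤ A*(ℓ:ℝ)*Real.log ((ℓ:ℝ)+1) + b*(ℓ:ℝ) := by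
    intro ℓ
    induction ℓ using Nat.strong_induction_on with
    | _ ℓ ih =>
      match ℓ with
      | 0 => simp [hm0]
      | 1 =>
        rw [hm1]
        have hl2 : 0 ≤ Real.log ((1:ℝ)+1) := Real.log_nonneg (by norm_num)
        push_cast
        nlinarith [hApos, hbpos, hb_def]
      | (N+2) =>
        have hN1 : 1 ≤ N+1 := by omega
        have hpt : ∀ θ : ℝ, 0 ≤ θ → θ ≤ 1 →
            ∑ k ∈ range ((N+1)+1), wgt (N+1) θ k * ((fun k => m₁ ((N+1)-k) + m₁ k) k)
              ≤ (A*(((N+1:ℕ):ℝ)*Real.log ((N+1:ℕ):ℝ)) + 4*A + b*((N+1:ℕ):ℝ))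
                + (-(A*L2*((N+1:ℕ):ℝ))) * binEnt θ := by
          intro θ h0 h1
          have h := upper_step_pointwise (N+1) hN1 h0 h1 A b hApos.le hbpos.le m₁
            (fun i hi => ih i (by omega))
          have he := hent_ln θ
          calc ∑ k ∈ range ((N+1)+1), wgt (N+1) θ k * ((fun k => m₁ ((N+1)-k) + m₁ k) k)
              ≤ A*(((N+1:ℕ):ℝ)*Real.log ((N+1:ℕ):ℝ))
                + A*((N+1:ℕ):ℝ)*(θ*Real.log θ + (1-θ)*Real.log (1-θ))
                + 4*A + b*((N+1:ℕ):ℝ) := h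
            _ = (A*(((N+1:ℕ):ℝ)*Real.log ((N+1:ℕ):ℝ)) + 4*A + b*((N+1:ℕ):ℝ))
                + (-(A*L2*((N+1:ℕ):ℝ))) * binEnt θ := by rw [he]; ring
        have hb2 := step_le μ hae (N+1) (fun k => m₁ ((N+1)-k) + m₁ k)
          (A*(((N+1:ℕ):ℝ)*Real.log ((N+1:ℕ):ℝ)) + 4*A + b*((N+1:ℕ):ℝ))
          (-(A*L2*((N+1:ℕ):ℝ))) hpt
        rw [← hH] at hb2
        have hrw : (-(A*L2*((N+1:ℕ):ℝ))) * H = -((N+1:ℕ):ℝ) := by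
          have h1 : A*L2*((N+1:ℕ):ℝ)*H = ((N+1:ℕ):ℝ) := by
            calc A*L2*((N+1:ℕ):ℝ)*H = (A*L2*H)*((N+1:ℕ):ℝ) := by ring
              _ = 1*((N+1:ℕ):ℝ) := by rw [hAH]
              _ = ((N+1:ℕ):ℝ) := one_mul _
          linarith [h1]
        rw [hrw] at hb2
        have hrec := hrec' (N+1)
        have hkey : m₁ (N+2) ≤ A*(((N:ℝ)+1)*Real.log ((N:ℝ)+1)) + b*((N:ℝ)+1) + b := by
          have : m₁ ((N+1)+1) = ((N+1:ℕ):ℝ)+1 + binExp μ ((N+1)+1) (fun k => m₁ ((N+1)-k) + m₁ k) := by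
            have := hrec' (N+1)
            push_cast at this ⊢
            linarith [this]
          rw [show N+2 = (N+1)+1 from rfl, this]
          push_cast at hb2 ⊢
          linarith [hb2]
        have hx1 : (1:ℝ) ≤ (N:ℝ)+1 := by
          have : (0:ℝ) ≤ (N:ℝ) := Nat.cast_nonneg N
          linarith
        have hlog1 : Real.log ((N:ℝ)+1) ≤ Real.log ((N:ℝ)+3) :=
          Real.log_le_log (by linarith) (by linarith)
        have hlog0 : 0 ≤ Real.log ((N:ℝ)+1) := Real.log_nonneg hx1
        have hmono : ((N:ℝ)+1)*Real.log ((N:ℝ)+1) ≤ ((N:ℝ)+2)*Real.log ((N:ℝ)+3) := by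
          have hlog3 : 0 ≤ Real.log ((N:ℝ)+3) := Real.log_nonneg (by linarith)
          nlinarith [hlog1, hlog0, hlog3]
        have target' : m₁ (N+2) ≤ A*((N:ℝ)+2)*Real.log ((N:ℝ)+3) + b*((N:ℝ)+2) := by
          have h2 := mul_le_mul_of_nonneg_left hmono hApos.le
          have hb0 : 0 < b := hbpos
          nlinarith [hkey, h2]
        show m₁ (N+2) ≤ A*(((N+2:ℕ)):ℝ)*Real.log ((((N+2:ℕ)):ℝ)+1) + b*(((N+2:ℕ)):ℝ)
        have hc2 : ((N+2:ℕ):ℝ) = (N:ℝ)+2 := by push_cast; ring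
        rw [hc2, show (N:ℝ)+2+1 = (N:ℝ)+3 by ring]
        exact target'
  -- LOWER BOUND
  have lower : ∀ ℓ : ℕ, A*(ℓ:ℝ)*Real.log ((ℓ:ℝ)+1) - B*(ℓ:ℝ) + D*Real.sqrt (ℓ:ℝ) ≤ m₁ ℓ := by
    intro ℓ
    induction ℓ using Nat.strong_induction_on with
    | _ ℓ ih =>
      match ℓ with
      | 0 => simp [hm0]
      | 1 =>
        rw [hm1]
        push_cast
        rw [Real.sqrt_one]
        have hlog2 : Real.log ((1:ℝ)+1) ≤ 1 := by
          have := Real.log_le_sub_one_of_pos (show (0:ℝ) < (1:ℝ)+1 by norm_num)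
          linarith
        have := mul_le_mul_of_nonneg_left hlog2 hApos.le
        have hBd : B = 6*A + D + 1 := hB_def
        nlinarith [hApos, hDpos]
      | (N+2) =>
        have hN1 : 1 ≤ N+1 := by omega
        have hpt : ∀ θ : ℝ, 0 ≤ θ → θ ≤ 1 →
            (A*(((N+1:ℕ):ℝ)*Real.log ((N+1:ℕ):ℝ)) - B*((N+1:ℕ):ℝ) + D*Real.sqrt ((N+1:ℕ):ℝ))
              + (-(A*L2*((N+1:ℕ):ℝ))) * binEnt θ
              + (D*(((N+1:ℕ):ℝ)-1)/(2*Real.sqrt ((N+1:ℕ):ℝ))) * (θ*(1-θ))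
              ≤ ∑ k ∈ range ((N+1)+1), wgt (N+1) θ k * ((fun k => m₁ ((N+1)-k) + m₁ k) k) := by
          intro θ h0 h1
          have h := lower_step_pointwise (N+1) hN1 h0 h1 A B D hApos.le hDpos.le m₁
            (fun i hi => ih i (by omega))
          have he := hent_ln θ
          calc (A*(((N+1:ℕ):ℝ)*Real.log ((N+1:ℕ):ℝ)) - B*((N+1:ℕ):ℝ) + D*Real.sqrt ((N+1:ℕ):ℝ))
              + (-(A*L2*((N+1:ℕ):ℝ))) * binEnt θ
              + (D*(((N+1:ℕ):ℝ)-1)/(2*Real.sqrt ((N+1:ℕ):ℝ))) * (θ*(1-θ))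
              = A*(((N+1:ℕ):ℝ)*Real.log ((N+1:ℕ):ℝ))
                + A*((N+1:ℕ):ℝ)*(θ*Real.log θ + (1-θ)*Real.log (1-θ))
                - B*((N+1:ℕ):ℝ) + D*Real.sqrt ((N+1:ℕ):ℝ)
                + (D*(((N+1:ℕ):ℝ)-1)/(2*Real.sqrt ((N+1:ℕ):ℝ)))*(θ*(1-θ)) := by
                rw [he]; ring
            _ ≤ _ := h
        have hb2 := step_ge μ hae (N+1) (fun k => m₁ ((N+1)-k) + m₁ k)
          (A*(((N+1:ℕ):ℝ)*Real.log ((N+1:ℕ):ℝ)) - B*((N+1:ℕ):ℝ) + D*Real.sqrt ((N+1:ℕ):ℝ))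
          (-(A*L2*((N+1:ℕ):ℝ))) (D*(((N+1:ℕ):ℝ)-1)/(2*Real.sqrt ((N+1:ℕ):ℝ))) hpt
        rw [← hH, ← hKq] at hb2
        have hrw : (-(A*L2*((N+1:ℕ):ℝ))) * H = -((N+1:ℕ):ℝ) := by
          have h1 : A*L2*((N+1:ℕ):ℝ)*H = ((N+1:ℕ):ℝ) := by
            calc A*L2*((N+1:ℕ):ℝ)*H = (A*L2*H)*((N+1:ℕ):ℝ) := by ring
              _ = 1*((N+1:ℕ):ℝ) := by rw [hAH]
              _ = ((N+1:ℕ):ℝ) := one_mul _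
          linarith [h1]
        rw [hrw] at hb2
        have hrecN : m₁ ((N+1)+1) = ((N+1:ℕ):ℝ)+1 + binExp μ ((N+1)+1) (fun k => m₁ ((N+1)-k) + m₁ k) := by
          have := hrec' (N+1)
          push_cast at this ⊢
          linarith [this]
        -- abbreviations
        set x : ℝ := (N:ℝ)+1 with hx_def
        have hx1 : (1:ℝ) ≤ x := by
          rw [hx_def]; linarith [Nat.cast_nonneg (α := ℝ) N]
        have hxpos : (0:ℝ) < x := by linarith
        set sx := Real.sqrt x with hsx_def
        have hsx2 : sx^2 = x := Real.sq_sqrt (by linarith)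
        have hsxpos : 0 < sx := Real.sqrt_pos.mpr hxpos
        have hsx1 : (1:ℝ) ≤ sx := by
          nlinarith [hsx2, hsxpos]
        have hcast : ((N+1:ℕ):ℝ) = x := by rw [hx_def]; push_cast; ring
        rw [hcast] at hb2
        have hkey : 1 + A*(x*Real.log x) - B*x + D*sx
            + (D*(x-1)/(2*sx))*Kq ≤ m₁ (N+2) := by
          rw [show N+2 = (N+1)+1 from rfl, hrecN, hcast]
          rw [← hsx_def] at hb2
          linarith [hb2]
        -- analytic facts
        have hlogd : x*(Real.log (x+2) - Real.log x) ≤ 2 := by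
          have h := Real.log_le_sub_one_of_pos (show (0:ℝ) < (x+2)/x by positivity)
          rw [Real.log_div (by linarith) (ne_of_gt hxpos)] at h
          have h2 : (x+2)/x - 1 = 2/x := by field_simp; ring
          rw [h2] at h
          have := mul_le_mul_of_nonneg_left h (le_of_lt hxpos)
          have h3 : x*(2/x) = 2 := by field_simp
          linarith [h3 ▸ this]
        have hlogs : Real.log (x+2) ≤ 4*sx := by
          have h1 : Real.log (x+2) ≤ 2*Real.sqrt (x+2) := log_le_two_sqrt (by linarith)
          have h2 : Real.sqrt (x+2) ≤ Real.sqrt (4*x) := Real.sqrt_le_sqrt (by linarith)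
          rw [sqrt_four_mul (by linarith)] at h2
          rw [← hsx_def] at h2
          linarith
        have hs1 : Real.sqrt (x+1) ≤ sx + 1 := by
          have := sqrt_succ_le (show (0:ℝ) ≤ x by linarith)
          rw [← hsx_def] at this
          exact this
        have hfrac : (sx-1)/2 ≤ (x-1)/(2*sx) := by
          rw [div_le_div_iff₀ (by norm_num) (by positivity)]
          nlinarith [hsx2, hsx1]
        have t4 : 4*A*(sx-1) ≤ (D*(x-1)/(2*sx))*Kq := by
          have e : (D*(x-1)/(2*sx))*Kq = (8*A)*((x-1)/(2*sx)) := by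
            rw [← hDK]; ring
          rw [e]
          have := mul_le_mul_of_nonneg_left hfrac (show (0:ℝ) ≤ 8*A by linarith)
          linarith [this]
        have t1 : A*((x+1)*Real.log (x+2)) ≤ A*(x*Real.log x + 2 + Real.log (x+2)) := by
          apply mul_le_mul_of_nonneg_left _ hApos.le
          nlinarith [hlogd]
        have t2 : A*Real.log (x+2) ≤ A*(4*sx) := mul_le_mul_of_nonneg_left hlogs hApos.le
        have t3 : D*Real.sqrt (x+1) ≤ D*(sx+1) := mul_le_mul_of_nonneg_left hs1 hDpos.le
        have hBd : B = 6*A + D + 1 := hB_def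
        -- conclude
        have target' : A*(x+1)*Real.log (x+2) - B*(x+1) + D*Real.sqrt (x+1) ≤ m₁ (N+2) :=
          lower_combine A B D Kq x sx (m₁ (N+2)) (Real.log x) (Real.log (x+2))
            (Real.sqrt (x+1)) hkey t4 t1 t2 t3 hBd
        show A*(((N+2:ℕ)):ℝ)*Real.log ((((N+2:ℕ)):ℝ)+1) - B*(((N+2:ℕ)):ℝ)
            + D*Real.sqrt (((N+2:ℕ)):ℝ) ≤ m₁ (N+2)
        have hc2 : ((N+2:ℕ):ℝ) = x+1 := by rw [hx_def]; push_cast; ring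
        rw [hc2, show x+1+1 = x+2 by ring]
        exact target'
  -- FINAL
  set E := b + B with hE_def
  have hEpos : 0 < E := by rw [hE_def]; linarith
  set C := 3*A + 2*E + 1 with hC_def
  have hCpos : 0 < C := by rw [hC_def]; linarith
  refine ⟨C^2, ?_⟩
  intro ℓ hℓ
  obtain ⟨N, rfl⟩ : ∃ N, ℓ = N+1 := ⟨ℓ-1, by omega⟩
  have hfun : (fun k => (m₁ k + m₁ ((N+1) - 1 - k) + (((N+1:ℕ)):ℝ) - m₁ (N+1)) ^ 2)
      = (fun k => (m₁ k + m₁ (N - k) + (((N+1:ℕ)):ℝ) - m₁ (N+1)) ^ 2) := by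
    funext k
    norm_num
  rw [hfun]
  have hz1 : (1:ℝ) ≤ ((N+1:ℕ):ℝ) := by push_cast; linarith [Nat.cast_nonneg (α := ℝ) N]
  have habs : ∀ k ∈ range (N+1),
      |m₁ k + m₁ (N-k) + ((N+1:ℕ):ℝ) - m₁ (N+1)| ≤ C*((N+1:ℕ):ℝ) := by
    intro k hk
    have hkN : k ≤ N := by simpa [Nat.lt_succ_iff] using Finset.mem_range.mp hk
    set x : ℝ := (k:ℝ) with hxd
    set y : ℝ := ((N-k:ℕ):ℝ) with hyd
    set z : ℝ := ((N+1:ℕ):ℝ) with hzd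
    have hx0 : 0 ≤ x := Nat.cast_nonneg k
    have hy0 : 0 ≤ y := Nat.cast_nonneg _
    have hxy : x + y + 1 = z := by
      rw [hxd, hyd, hzd, Nat.cast_sub hkN]
      push_cast
      ring
    have u1 := upper k
    have u2 := upper (N-k)
    have u3 := upper (N+1)
    have l1 : A*x*Real.log (x+1) - B*x ≤ m₁ k := by
      have h := lower k
      have := mul_nonneg hDpos.le (Real.sqrt_nonneg ((k:ℝ)))
      rw [← hxd] at h this
      linarith [h, this]
    have l2 : A*y*Real.log (y+1) - B*y ≤ m₁ (N-k) := by
      have h := lower (N-k)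
      have := mul_nonneg hDpos.le (Real.sqrt_nonneg (((N-k:ℕ)):ℝ))
      rw [← hyd] at h this
      linarith [h, this]
    have l3 : A*z*Real.log (z+1) - B*z ≤ m₁ (N+1) := by
      have h := lower (N+1)
      have := mul_nonneg hDpos.le (Real.sqrt_nonneg (((N+1:ℕ)):ℝ))
      rw [← hzd] at h this
      linarith [h, this]
    have hsuper := phi_super hx0 hy0
    rw [show x+y+1 = z from hxy, show x+y+2 = z+1 by linarith [hxy]] at hsuper
    have hgap := phi_gap hx0 hy0
    rw [show x+y+1 = z from hxy, show x+y+2 = z+1 by linarith [hxy]] at hgap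
    have hlogz : Real.log (z+1) ≤ z := by
      have := Real.log_le_sub_one_of_pos (show (0:ℝ) < z+1 by linarith)
      linarith
    have hz1' : (1:ℝ) ≤ z := by rw [hzd]; exact hz1
    have hcomb := final_combine A b B E C x y z (m₁ k) (m₁ (N-k)) (m₁ (N+1))
      (Real.log (x+1)) (Real.log (y+1)) (Real.log (z+1)) hxy hz1'
      u1 u2 u3 l1 l2 l3
      (mul_le_mul_of_nonneg_left hsuper hApos.le)
      (mul_le_mul_of_nonneg_left (by linarith [hgap]) hApos.le)
      (mul_le_mul_of_nonneg_left hlogz hApos.le)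
      (mul_le_mul_of_nonneg_left hz1' hApos.le)
      (mul_nonneg hApos.le (by linarith)) (mul_nonneg hbpos.le (by linarith))
      (mul_nonneg hBpos.le (by linarith)) hbpos.le hBpos.le hE_def hC_def
    rw [abs_le]
    exact ⟨by linarith [hcomb.1], by linarith [hcomb.2]⟩
  have hpt : ∀ θ : ℝ, 0 ≤ θ → θ ≤ 1 →
      ∑ k ∈ range (N+1), wgt N θ k * ((fun k => (m₁ k + m₁ (N - k) + (((N+1:ℕ)):ℝ) - m₁ (N+1)) ^ 2) k)
        ≤ C^2*((N+1:ℕ):ℝ)^2 + 0 * binEnt θ := by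
    intro θ h0 h1
    have hsum : ∑ k ∈ range (N+1), wgt N θ k * ((fun k => (m₁ k + m₁ (N - k) + (((N+1:ℕ)):ℝ) - m₁ (N+1)) ^ 2) k)
        ≤ ∑ k ∈ range (N+1), wgt N θ k * (C*((N+1:ℕ):ℝ))^2 := by
      apply Finset.sum_le_sum
      intro k hk
      apply mul_le_mul_of_nonneg_left _ (wgt_nonneg h0 h1 k)
      have h := abs_le.mp (habs k hk)
      exact sq_le_sq' h.1 h.2
    calc ∑ k ∈ range (N+1), wgt N θ k * ((fun k => (m₁ k + m₁ (N - k) + (((N+1:ℕ)):ℝ) - m₁ (N+1)) ^ 2) k)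
        ≤ ∑ k ∈ range (N+1), wgt N θ k * (C*((N+1:ℕ):ℝ))^2 := hsum
      _ = (∑ k ∈ range (N+1), wgt N θ k) * (C*((N+1:ℕ):ℝ))^2 := by
          rw [Finset.sum_mul]
      _ = (C*((N+1:ℕ):ℝ))^2 := by rw [sum_wgt]; ring
      _ = C^2*((N+1:ℕ):ℝ)^2 + 0 * binEnt θ := by ring
  have hfinal := step_le μ hae N
    (fun k => (m₁ k + m₁ (N - k) + (((N+1:ℕ)):ℝ) - m₁ (N+1)) ^ 2)
    (C^2*((N+1:ℕ):ℝ)^2) 0 hpt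
  rw [← hH] at hfinal
  linarith [hfinal]
end

section
/- Let Π be a Borel probability measure on [0,1], Θ ~ Π, h := E[H_B(Θ)], and let Δ : ℕ → ℝ be the unique function with Δ(0) = 1 and, for ℓ ≥ 1, Δ(ℓ) = 1 + E[Δ(Γ_ℓ)]. Then h·Δ(ℓ) ≤ log₂(ℓ+1) + h for every ℓ ≥ 1. -/
open MeasureTheory

/-- Expectation of `g (Γ_ℓ)` where `θ ~ μ` and, conditionally on `θ`, `Γ_ℓ` is
`Binomial(ℓ-1, θ)` with probability `θ` and `Binomial(ℓ-1, 1-θ)` with probability `1-θ`. -/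
noncomputable def gammaExp (μ : Measure ℝ) (ℓ : ℕ) (g : ℕ → ℝ) : ℝ :=
  ∫ θ, (θ * ∑ k ∈ Finset.range ℓ,
          ((ℓ - 1).choose k : ℝ) * θ ^ k * (1 - θ) ^ (ℓ - 1 - k) * g k
      + (1 - θ) * ∑ k ∈ Finset.range ℓ,
          ((ℓ - 1).choose k : ℝ) * (1 - θ) ^ k * θ ^ (ℓ - 1 - k) * g k) ∂μ

/-! ### Auxiliary definitions and lemmas -/

noncomputable def Gfun (ℓ : ℕ) (g : ℕ → ℝ) (θ : ℝ) : ℝ :=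
  θ * ∑ k ∈ Finset.range ℓ,
          ((ℓ - 1).choose k : ℝ) * θ ^ k * (1 - θ) ^ (ℓ - 1 - k) * g k
      + (1 - θ) * ∑ k ∈ Finset.range ℓ,
          ((ℓ - 1).choose k : ℝ) * (1 - θ) ^ k * θ ^ (ℓ - 1 - k) * g k

lemma gammaExp_eq (μ : Measure ℝ) (ℓ : ℕ) (g : ℕ → ℝ) :
    gammaExp μ ℓ g = ∫ θ, Gfun ℓ g θ ∂μ := rfl

lemma sum_pmf (n : ℕ) (p q : ℝ) (hpq : p + q = 1) :
    ∑ k ∈ Finset.range (n+1), (n.choose k : ℝ) * p ^ k * q ^ (n-k) = 1 := by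
  have h := add_pow p q n
  rw [hpq, one_pow] at h
  rw [show ∑ k ∈ Finset.range (n+1), (n.choose k : ℝ) * p ^ k * q ^ (n-k)
      = ∑ k ∈ Finset.range (n+1), p ^ k * q ^ (n-k) * (n.choose k : ℝ) from
    Finset.sum_congr rfl fun k _ => by ring]
  exact h.symm

lemma sum_mean (n : ℕ) (p q : ℝ) (hpq : p + q = 1) :
    ∑ k ∈ Finset.range (n+1), (n.choose k : ℝ) * p ^ k * q ^ (n-k) * k = n * p := by
  cases n with
  | zero => simp
  | succ m =>
    rw [Finset.sum_range_succ']
    have key : ∀ i : ℕ, ((m+1).choose (i+1) : ℝ) * ((i:ℝ)+1) = ((m:ℝ)+1) * (m.choose i : ℝ) := by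
      intro i
      have h := congrArg (Nat.cast : ℕ → ℝ) (Nat.add_one_mul_choose_eq m i)
      push_cast at h
      linarith
    have step : ∀ i ∈ Finset.range (m+1),
        (((m+1).choose (i+1) : ℝ)) * p ^ (i+1) * q ^ (m+1-(i+1)) * ((i+1 : ℕ) : ℝ)
        = ((m:ℝ)+1) * p * ((m.choose i : ℝ) * p ^ i * q ^ (m-i)) := by
      intro i _
      have h2 : m + 1 - (i+1) = m - i := by omega
      rw [h2]
      push_cast
      linear_combination (p ^ (i+1) * q ^ (m-i)) * key i
    rw [Finset.sum_congr rfl step, ← Finset.mul_sum, sum_pmf m p q hpq]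
    push_cast
    ring

lemma sum_mean' (n : ℕ) (p q : ℝ) (hpq : p + q = 1) :
    ∑ k ∈ Finset.range (n+1), ((n.choose k : ℝ) * p ^ k * q ^ (n-k)) * ((k:ℝ)+1)
      = n * p + 1 := by
  have h1 := sum_pmf n p q hpq
  have h2 := sum_mean n p q hpq
  rw [show ∑ k ∈ Finset.range (n+1), ((n.choose k : ℝ) * p ^ k * q ^ (n-k)) * ((k:ℝ)+1)
      = ∑ k ∈ Finset.range (n+1), ((n.choose k : ℝ) * p ^ k * q ^ (n-k) * k
          + (n.choose k : ℝ) * p ^ k * q ^ (n-k)) from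
    Finset.sum_congr rfl fun k _ => by ring]
  rw [Finset.sum_add_distrib, h1, h2]

lemma jensen_logb (n : ℕ) (w a : ℕ → ℝ) (hw : ∀ i ∈ Finset.range n, 0 ≤ w i)
    (hw1 : ∑ i ∈ Finset.range n, w i = 1) (ha : ∀ i ∈ Finset.range n, 0 < a i) :
    ∑ i ∈ Finset.range n, w i * Real.logb 2 (a i)
      ≤ Real.logb 2 (∑ i ∈ Finset.range n, w i * a i) := by
  have hc : ConcaveOn ℝ (Set.Ioi (0:ℝ)) Real.log := strictConcaveOn_log_Ioi.concaveOn
  have hJ := hc.le_map_sum hw hw1 (p := a) (fun i hi => ha i hi)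
  simp only [smul_eq_mul] at hJ
  have hl2 : (0:ℝ) < Real.log 2 := Real.log_pos one_lt_two
  simp only [Real.logb]
  rw [show ∑ i ∈ Finset.range n, w i * (Real.log (a i) / Real.log 2)
      = (∑ i ∈ Finset.range n, w i * Real.log (a i)) / Real.log 2 from by
    rw [Finset.sum_div]; exact Finset.sum_congr rfl fun i _ => by ring]
  exact (div_le_div_iff_of_pos_right hl2).mpr hJ

lemma continuous_binEnt : Continuous binEnt := by
  have : binEnt = fun p => -((p * Real.log p) / Real.log 2)
      - ((1-p) * Real.log (1-p)) / Real.log 2 := by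
    funext p
    simp only [binEnt, Real.logb]
    ring
  rw [this]
  have h1 : Continuous fun p : ℝ => (1:ℝ) - p := continuous_const.sub continuous_id
  exact ((Real.continuous_mul_log.div_const _).neg).sub
    ((Real.continuous_mul_log.comp h1).div_const _)

lemma continuous_Gfun (ℓ : ℕ) (g : ℕ → ℝ) : Continuous (Gfun ℓ g) := by
  unfold Gfun
  apply Continuous.add
  · exact continuous_id.mul (continuous_finset_sum _ fun k _ => by fun_prop)
  · exact (continuous_const.sub continuous_id).mul
      (continuous_finset_sum _ fun k _ => by fun_prop)

lemma ae_Icc {μ : Measure ℝ} (hsupp : μ (Set.Icc (0:ℝ) 1)ᶜ = 0) :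
    ∀ᵐ θ ∂μ, θ ∈ Set.Icc (0:ℝ) 1 := by
  rw [MeasureTheory.ae_iff]
  simpa [Set.compl_def] using hsupp

lemma integrable_cont {μ : Measure ℝ} [IsProbabilityMeasure μ]
    (hsupp : μ (Set.Icc (0:ℝ) 1)ᶜ = 0) {f : ℝ → ℝ} (hf : Continuous f) :
    Integrable f μ := by
  obtain ⟨C, hC⟩ := (isCompact_Icc : IsCompact (Set.Icc (0:ℝ) 1)).exists_bound_of_continuousOn
    hf.continuousOn
  refine (integrable_const C).mono' hf.aestronglyMeasurable ?_
  filter_upwards [ae_Icc hsupp] with θ hθ using hC θ hθ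

lemma Gfun_mono (ℓ : ℕ) {g₁ g₂ : ℕ → ℝ} (hg : ∀ k, k < ℓ → g₁ k ≤ g₂ k)
    {θ : ℝ} (h0 : 0 ≤ θ) (h1 : θ ≤ 1) : Gfun ℓ g₁ θ ≤ Gfun ℓ g₂ θ := by
  have h1' : (0:ℝ) ≤ 1 - θ := by linarith
  unfold Gfun
  apply add_le_add
  · apply mul_le_mul_of_nonneg_left _ h0
    apply Finset.sum_le_sum
    intro k hk
    exact mul_le_mul_of_nonneg_left (hg k (Finset.mem_range.mp hk))
      (by positivity)
  · apply mul_le_mul_of_nonneg_left _ h1'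
    apply Finset.sum_le_sum
    intro k hk
    exact mul_le_mul_of_nonneg_left (hg k (Finset.mem_range.mp hk))
      (by positivity)

lemma Gfun_smul (ℓ : ℕ) (c : ℝ) (g : ℕ → ℝ) (θ : ℝ) :
    Gfun ℓ (fun k => c * g k) θ = c * Gfun ℓ g θ := by
  unfold Gfun
  rw [show ∑ k ∈ Finset.range ℓ, ((ℓ-1).choose k : ℝ) * θ^k * (1-θ)^(ℓ-1-k) * (c * g k)
      = c * ∑ k ∈ Finset.range ℓ, ((ℓ-1).choose k : ℝ) * θ^k * (1-θ)^(ℓ-1-k) * g k from by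
    rw [Finset.mul_sum]; exact Finset.sum_congr rfl fun k _ => by ring]
  rw [show ∑ k ∈ Finset.range ℓ, ((ℓ-1).choose k : ℝ) * (1-θ)^k * θ^(ℓ-1-k) * (c * g k)
      = c * ∑ k ∈ Finset.range ℓ, ((ℓ-1).choose k : ℝ) * (1-θ)^k * θ^(ℓ-1-k) * g k from by
    rw [Finset.mul_sum]; exact Finset.sum_congr rfl fun k _ => by ring]
  ring

lemma Gfun_add_const (n : ℕ) (g : ℕ → ℝ) (c θ : ℝ) :
    Gfun (n+1) (fun k => g k + c) θ = Gfun (n+1) g θ + c := by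
  unfold Gfun
  simp only [Nat.add_sub_cancel]
  have split : ∀ p q : ℝ, p + q = 1 →
      ∑ k ∈ Finset.range (n+1), (n.choose k : ℝ) * p^k * q^(n-k) * (g k + c)
      = (∑ k ∈ Finset.range (n+1), (n.choose k : ℝ) * p^k * q^(n-k) * g k) + c := by
    intro p q hpq
    rw [show ∑ k ∈ Finset.range (n+1), (n.choose k : ℝ) * p^k * q^(n-k) * (g k + c)
        = ∑ k ∈ Finset.range (n+1), ((n.choose k : ℝ) * p^k * q^(n-k) * g k
            + c * ((n.choose k : ℝ) * p^k * q^(n-k))) from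
      Finset.sum_congr rfl fun k _ => by ring]
    rw [Finset.sum_add_distrib, ← Finset.mul_sum, sum_pmf n p q hpq, mul_one]
  rw [split θ (1-θ) (by ring), split (1-θ) θ (by ring)]
  ring

/-- Jensen step: for `p + q = 1`, `p, q ≥ 0`,
`∑ pmf(k) log₂(k+1) ≤ log₂(n p + 1)`. -/
lemma stepA (n : ℕ) (p q : ℝ) (hp : 0 ≤ p) (hq : 0 ≤ q) (hpq : p + q = 1) :
    ∑ k ∈ Finset.range (n+1), (n.choose k : ℝ) * p^k * q^(n-k) * Real.logb 2 ((k:ℝ)+1)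
      ≤ Real.logb 2 ((n:ℝ) * p + 1) := by
  have hJ := jensen_logb (n+1) (fun k => (n.choose k : ℝ) * p^k * q^(n-k))
    (fun k => (k:ℝ)+1)
    (fun i _ => by positivity)
    (sum_pmf n p q hpq)
    (fun i _ => by positivity)
  rw [sum_mean' n p q hpq] at hJ
  exact hJ

/-- Core pointwise inequality. -/
lemma core (n : ℕ) {θ : ℝ} (h0 : 0 ≤ θ) (h1 : θ ≤ 1) :
    Gfun (n+1) (fun k => Real.logb 2 ((k:ℝ)+1)) θ + binEnt θ ≤ Real.logb 2 ((n:ℝ)+2) := by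
  have h0' : (0:ℝ) ≤ 1 - θ := by linarith
  unfold Gfun
  simp only [Nat.add_sub_cancel]
  have hS1 := stepA n θ (1-θ) h0 h0' (by ring)
  have hS2 := stepA n (1-θ) θ h0' h0 (by ring)
  have key2 : θ * Real.logb 2 ((n:ℝ)*θ+1) + (1-θ) * Real.logb 2 ((n:ℝ)*(1-θ)+1) + binEnt θ
      ≤ Real.logb 2 ((n:ℝ)+2) := by
    rcases eq_or_lt_of_le h0 with h0e | h0lt
    · -- θ = 0
      have : θ = 0 := h0e.symm
      subst this
      simp only [binEnt, Real.logb_zero, mul_zero, neg_zero, sub_zero, zero_mul, zero_add,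
        mul_one, Real.logb_one, one_mul, mul_zero, add_zero]
      exact Real.logb_le_logb_of_le one_lt_two (by positivity) (by linarith)
    rcases eq_or_lt_of_le h1 with h1e | h1lt
    · -- θ = 1
      subst h1e
      simp only [binEnt, sub_self, Real.logb_zero, mul_zero, Real.logb_one, mul_one,
        neg_zero, sub_zero, zero_mul, add_zero, one_mul, zero_add]
      exact Real.logb_le_logb_of_le one_lt_two (by positivity) (by linarith)
    · -- 0 < θ < 1
      have ht : (0:ℝ) < 1 - θ := by linarith
      have hx : ((n:ℝ)*θ+1)/θ ∈ Set.Ioi (0:ℝ) := by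
        have : (0:ℝ) < (n:ℝ)*θ+1 := by positivity
        exact Set.mem_Ioi.mpr (by positivity)
      have hy : ((n:ℝ)*(1-θ)+1)/(1-θ) ∈ Set.Ioi (0:ℝ) := by
        have : (0:ℝ) < (n:ℝ)*(1-θ)+1 := by positivity
        exact Set.mem_Ioi.mpr (by positivity)
      have hc : ConcaveOn ℝ (Set.Ioi (0:ℝ)) Real.log := strictConcaveOn_log_Ioi.concaveOn
      have h2 := hc.2 hx hy h0 (le_of_lt ht) (by ring)
      simp only [smul_eq_mul] at h2
      rw [show θ * (((n:ℝ)*θ+1)/θ) + (1-θ) * (((n:ℝ)*(1-θ)+1)/(1-θ)) = (n:ℝ)+2 from by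
        field_simp; ring] at h2
      rw [Real.log_div (by positivity) (ne_of_gt h0lt),
        Real.log_div (by positivity) (ne_of_gt ht)] at h2
      -- convert log statement to logb
      have hl2 : (0:ℝ) < Real.log 2 := Real.log_pos one_lt_two
      simp only [binEnt, Real.logb]
      rw [show θ * (Real.log ((n:ℝ)*θ+1) / Real.log 2)
            + (1-θ) * (Real.log ((n:ℝ)*(1-θ)+1) / Real.log 2)
            + (-(θ * (Real.log θ / Real.log 2)) - (1-θ) * (Real.log (1-θ) / Real.log 2))
          = (θ * (Real.log ((n:ℝ)*θ+1) - Real.log θ)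
            + (1-θ) * (Real.log ((n:ℝ)*(1-θ)+1) - Real.log (1-θ))) / Real.log 2 from by
        field_simp; ring]
      exact (div_le_div_iff_of_pos_right hl2).mpr h2
  calc θ * ∑ k ∈ Finset.range (n+1), (n.choose k : ℝ) * θ^k * (1-θ)^(n-k) * Real.logb 2 ((k:ℝ)+1)
        + (1-θ) * ∑ k ∈ Finset.range (n+1), (n.choose k : ℝ) * (1-θ)^k * θ^(n-k) * Real.logb 2 ((k:ℝ)+1)
        + binEnt θ
      ≤ θ * Real.logb 2 ((n:ℝ)*θ+1) + (1-θ) * Real.logb 2 ((n:ℝ)*(1-θ)+1) + binEnt θ := by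
        have := mul_le_mul_of_nonneg_left hS1 h0
        have := mul_le_mul_of_nonneg_left hS2 h0'
        linarith
    _ ≤ Real.logb 2 ((n:ℝ)+2) := key2

theorem stmt7 (μ : Measure ℝ) [IsProbabilityMeasure μ]
    (hsupp : μ (Set.Icc (0:ℝ) 1)ᶜ = 0)
    (h : ℝ) (hdef : h = ∫ θ, binEnt θ ∂μ)
    (Δ : ℕ → ℝ) (hΔ0 : Δ 0 = 1)
    (hΔrec : ∀ ℓ : ℕ, 1 ≤ ℓ → Δ ℓ = 1 + gammaExp μ ℓ Δ) :
    ∀ ℓ : ℕ, 1 ≤ ℓ → h * Δ ℓ ≤ Real.logb 2 ((ℓ : ℝ) + 1) + h := by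
  have main : ∀ ℓ : ℕ, h * Δ ℓ ≤ Real.logb 2 ((ℓ : ℝ) + 1) + h := by
    intro ℓ
    induction ℓ using Nat.strong_induction_on with
    | _ ℓ IH =>
      rcases Nat.eq_zero_or_pos ℓ with rfl | hℓ
      · simp [hΔ0]
      · obtain ⟨n, rfl⟩ : ∃ n, ℓ = n + 1 := ⟨ℓ-1, by omega⟩
        set φ : ℕ → ℝ := fun k => Real.logb 2 ((k:ℝ)+1) with hφ
        have hGφ : Continuous (Gfun (n+1) φ) := continuous_Gfun _ _
        have int1 : Integrable (fun θ => h * Gfun (n+1) Δ θ) μ :=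
          integrable_cont hsupp (continuous_const.mul (continuous_Gfun _ _))
        have int2 : Integrable (fun θ => Gfun (n+1) φ θ + h) μ :=
          integrable_cont hsupp (hGφ.add continuous_const)
        have int3 : Integrable (fun θ => Gfun (n+1) φ θ + binEnt θ) μ :=
          integrable_cont hsupp (hGφ.add continuous_binEnt)
        have int4 : Integrable (fun θ => Gfun (n+1) φ θ) μ := integrable_cont hsupp hGφ
        have int5 : Integrable binEnt μ := integrable_cont hsupp continuous_binEnt
        -- Step I1 : ∫ h · Gfun Δ ≤ ∫ (Gfun φ + h)
        have I1 : ∫ θ, h * Gfun (n+1) Δ θ ∂μ ≤ ∫ θ, (Gfun (n+1) φ θ + h) ∂μ := by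
          refine integral_mono_ae int1 int2 ?_
          filter_upwards [ae_Icc hsupp] with θ hθ
          rw [← Gfun_smul]
          calc Gfun (n+1) (fun k => h * Δ k) θ
              ≤ Gfun (n+1) (fun k => φ k + h) θ := by
                refine Gfun_mono _ (fun k hk => ?_) hθ.1 hθ.2
                exact IH k hk
            _ = Gfun (n+1) φ θ + h := Gfun_add_const n φ h θ
        -- Step I2 : ∫ (Gfun φ + binEnt) ≤ logb 2 (n+2)
        have I2 : ∫ θ, (Gfun (n+1) φ θ + binEnt θ) ∂μ ≤ Real.logb 2 ((n:ℝ)+2) := by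
          have := integral_mono_ae int3 (integrable_const (Real.logb 2 ((n:ℝ)+2))) ?_
          · simpa using this
          · filter_upwards [ae_Icc hsupp] with θ hθ
            exact core n hθ.1 hθ.2
        have e2 : ∫ θ, (Gfun (n+1) φ θ + h) ∂μ = (∫ θ, Gfun (n+1) φ θ ∂μ) + h := by
          rw [integral_add int4 (integrable_const h)]
          simp
        have e3 : ∫ θ, (Gfun (n+1) φ θ + binEnt θ) ∂μ
            = (∫ θ, Gfun (n+1) φ θ ∂μ) + h := by
          rw [integral_add int4 int5, hdef]
        rw [hΔrec (n+1) (by omega), gammaExp_eq, mul_add, mul_one, ← integral_const_mul]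
        have : ((n:ℝ)+1) + 1 = (n:ℝ)+2 := by ring
        rw [Nat.cast_add, Nat.cast_one, this]
        rw [e2] at I1
        rw [e3] at I2
        linarith
  exact fun ℓ _ => main ℓ
end
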